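/- (Abstract non-almost-periodicity lemma) Let X : ℝ → L²(Ω; E) be a continuous square-integrable E-valued process with (‖X_t‖²)_{t∈ℝ} uniformly integrable. Suppose there exists a sequence t_n → ∞ such that for every continuous linear functional x* on E and every n, lim_{m→∞} Cov(⟨x*, X_{t_n}⟩, ⟨x*, X_{t_m}⟩) = 0, and lim inf_{m→∞} Var(‖X_{t_m}‖) > 0. Then the map t ↦ X_t from ℝ to L²(Ω; E) is not almost periodic in Bohr's sense. -/

import Mathlib

open MeasureTheory ProbabilityTheory Filter

noncomputable section

/-- Covariance of two real random variables. -/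
def cov {Ω : Type*} [MeasurableSpace Ω] (P : Measure Ω) (X Y : Ω → ℝ) : ℝ :=
  ∫ ω, (X ω - ∫ a, X a ∂P) * (Y ω - ∫ a, Y a ∂P) ∂P

/-- Bohr almost periodicity for a function into a (pseudo)metric space. -/
def BohrAlmostPeriodic {α : Type*} [PseudoMetricSpace α] (f : ℝ → α) : Prop :=
  ∀ ε > 0, ∃ l > 0, ∀ a : ℝ, ∃ τ ∈ Set.Icc a (a + l), ∀ t : ℝ,
    dist (f (t + τ)) (f t) ≤ ε

section Aux

variable {Ω : Type*} [MeasurableSpace Ω] (P : Measure Ω) [IsProbabilityMeasure P]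

lemma cov_congr {f f' g g' : Ω → ℝ} (hf : f =ᵐ[P] f') (hg : g =ᵐ[P] g') :
    cov P f g = cov P f' g' := by
  unfold cov
  rw [integral_congr_ae hf, integral_congr_ae hg]
  refine integral_congr_ae ?_
  filter_upwards [hf, hg] with ω h1 h2
  rw [h1, h2]

/-- The constant function `1` as an element of `L²`. -/
def oneL2 : Lp ℝ 2 P := (memLp_const (1 : ℝ)).toLp (fun _ => (1 : ℝ))

lemma inner_oneL2 (F : Lp ℝ 2 P) :
    (inner (𝕜 := ℝ) F (oneL2 P)) = ∫ ω, F ω ∂P := by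
  rw [L2.inner_def]
  refine integral_congr_ae ?_
  filter_upwards [MemLp.coeFn_toLp (memLp_const (1 : ℝ))] with ω h
  show (inner (𝕜 := ℝ) (F ω) ((oneL2 P) ω)) = F ω
  rw [show ((oneL2 P) ω) = ((memLp_const (1 : ℝ)).toLp (fun _ => (1:ℝ))) ω from rfl, h]
  simp [RCLike.inner_apply]

/-- Covariance as a function on `L²`. -/
def covL (F G : Lp ℝ 2 P) : ℝ :=
  inner (𝕜 := ℝ) (F - (inner (𝕜 := ℝ) F (oneL2 P)) • oneL2 P)
    (G - (inner (𝕜 := ℝ) G (oneL2 P)) • oneL2 P)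

lemma covL_continuous : Continuous (fun p : Lp ℝ 2 P × Lp ℝ 2 P => covL P p.1 p.2) := by
  apply Continuous.inner
  · exact continuous_fst.sub (Continuous.smul (f := fun p : Lp ℝ 2 P × Lp ℝ 2 P => inner ℝ p.1 (oneL2 P))
      (g := fun _ => oneL2 P) (continuous_fst.inner continuous_const) continuous_const)
  · exact continuous_snd.sub (Continuous.smul (f := fun p : Lp ℝ 2 P × Lp ℝ 2 P => inner ℝ p.2 (oneL2 P))
      (g := fun _ => oneL2 P) (continuous_snd.inner continuous_const) continuous_const)

lemma sub_mean_coe (F : Lp ℝ 2 P) :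
    ⇑(F - (inner (𝕜 := ℝ) F (oneL2 P)) • oneL2 P) =ᵐ[P] fun ω => F ω - ∫ a, F a ∂P := by
  rw [inner_oneL2]
  filter_upwards [Lp.coeFn_sub F ((∫ a, F a ∂P) • oneL2 P),
    Lp.coeFn_smul (∫ a, F a ∂P) (oneL2 P),
    MemLp.coeFn_toLp (memLp_const (1 : ℝ))] with ω h1 h2 h3
  rw [h1]
  simp only [Pi.sub_apply]
  rw [h2]
  simp only [Pi.smul_apply, smul_eq_mul]
  rw [show ((oneL2 P) ω) = ((memLp_const (1 : ℝ)).toLp (fun _ => (1:ℝ))) ω from rfl, h3, mul_one]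

lemma cov_covL (F G : Lp ℝ 2 P) : cov P ⇑F ⇑G = covL P F G := by
  unfold covL
  rw [L2.inner_def]
  unfold cov
  refine integral_congr_ae ?_
  filter_upwards [sub_mean_coe P F, sub_mean_coe P G] with ω h1 h2
  rw [h1, h2, RCLike.inner_apply, conj_trivial, mul_comm]

lemma cov_eq_covL {f g : Ω → ℝ} {F G : Lp ℝ 2 P} (hf : f =ᵐ[P] ⇑F) (hg : g =ᵐ[P] ⇑G) :
    cov P f g = covL P F G :=
  (cov_congr P hf hg).trans (cov_covL P F G)

lemma variance_eq_covL {f : Ω → ℝ} {F : Lp ℝ 2 P} (hf : f =ᵐ[P] ⇑F) :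
    variance f P = covL P F F := by
  have hm : MemLp f 2 P := MemLp.ae_eq hf.symm (Lp.memLp F)
  rw [variance_eq_integral hm.aestronglyMeasurable.aemeasurable, ← cov_eq_covL P hf hf]
  unfold cov
  refine integral_congr_ae (Eventually.of_forall fun ω => ?_)
  simp [sq]

lemma cov_const (a b : ℝ) : cov P (fun _ => a) (fun _ => b) = 0 := by
  unfold cov
  simp

lemma covL_tendsto {ι : Type*} {l : Filter ι} {F G : ι → Lp ℝ 2 P} {F0 G0 : Lp ℝ 2 P}
    (hF : Tendsto F l (nhds F0)) (hG : Tendsto G l (nhds G0)) :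
    Tendsto (fun k => covL P (F k) (G k)) l (nhds (covL P F0 G0)) := by
  unfold covL
  exact (hF.sub ((hF.inner tendsto_const_nhds).smul tendsto_const_nhds)).inner
    (hG.sub ((hG.inner tendsto_const_nhds).smul tendsto_const_nhds))
end Aux

lemma totallyBounded_range_of_bohr {α : Type*} [PseudoMetricSpace α] {f : ℝ → α}
    (hc : Continuous f) (hap : BohrAlmostPeriodic f) : TotallyBounded (Set.range f) := by
  rw [Metric.totallyBounded_iff]
  intro ε hε
  obtain ⟨l, hl, hτ⟩ := hap (ε / 3) (by positivity)
  have hK : IsCompact (f '' Set.Icc 0 l) := isCompact_Icc.image hc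
  obtain ⟨s, hsfin, hscover⟩ := Metric.totallyBounded_iff.1 hK.totallyBounded (ε / 3)
    (by positivity)
  refine ⟨s, hsfin, ?_⟩
  rintro _ ⟨u, rfl⟩
  obtain ⟨τ, hτmem, hτd⟩ := hτ (-u)
  have h1 : u + τ ∈ Set.Icc (0 : ℝ) l := ⟨by linarith [hτmem.1], by linarith [hτmem.2]⟩
  have h2 : dist (f (u + τ)) (f u) ≤ ε / 3 := hτd u
  have h3 : f (u + τ) ∈ ⋃ y ∈ s, Metric.ball y (ε / 3) := hscover ⟨u + τ, h1, rfl⟩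
  simp only [Set.mem_iUnion, Metric.mem_ball, exists_prop] at h3 ⊢
  obtain ⟨y, hy, hby⟩ := h3
  refine ⟨y, hy, ?_⟩
  calc dist (f u) y ≤ dist (f u) (f (u + τ)) + dist (f (u + τ)) y := dist_triangle _ _ _
    _ < ε := by rw [dist_comm] at h2; linarith

set_option maxHeartbeats 1000000 in
/-- Abstract non-almost-periodicity lemma: a continuous `L²`-process with uniformly
integrable squared norms, whose coordinates decorrelate along a sequence `t n → ∞` while
the variances of the norms stay bounded away from `0`, is not mean square almost
periodic. -/
theorem stmt6 {Ω : Type*} [MeasurableSpace Ω] (P : Measure Ω) [IsProbabilityMeasure P]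
    {E : Type*} [NormedAddCommGroup E] [NormedSpace ℝ E] [CompleteSpace E]
    [SecondCountableTopology E] [MeasurableSpace E] [BorelSpace E]
    [Fact ((1 : ENNReal) ≤ 2)]
    (X : ℝ → Lp E 2 P) (hXcont : Continuous X)
    (hui : UnifIntegrable (fun t ω => ‖X t ω‖ ^ 2) 1 P)
    (t : ℕ → ℝ) (htlim : Tendsto t atTop atTop)
    (hcov : ∀ (xstar : E →L[ℝ] ℝ) (n : ℕ),
      Tendsto (fun m => cov P (fun ω => xstar (X (t n) ω)) (fun ω => xstar (X (t m) ω)))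
        atTop (nhds 0))
    (hvar : 0 < Filter.liminf (fun m => variance (fun ω => ‖X (t m) ω‖) P) atTop) :
    ¬ BohrAlmostPeriodic X := by
  intro hap
  -- Step 1: extract a convergent subsequence of `X (t n)`.
  have htb : TotallyBounded (Set.range X) := totallyBounded_range_of_bohr hXcont hap
  have hcomp : IsCompact (closure (Set.range X)) :=
    htb.closure.isCompact_of_isClosed isClosed_closure
  obtain ⟨Y, -, φ, hφ, hconv⟩ :=
    hcomp.isSeqCompact (x := fun n => X (t n))
      (fun n => subset_closure (Set.mem_range_self _))
  have hφtop : Tendsto φ atTop atTop := hφ.tendsto_atTop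
  -- Step 2: each coordinate of `Y` is a.e. constant.
  have hYint : Integrable (⇑Y) P := MemLp.integrable one_le_two (Lp.memLp Y)
  set c : E := ∫ ω, Y ω ∂P with hc
  have hcoord : ∀ xstar : E →L[ℝ] ℝ, (fun ω => xstar (Y ω)) =ᵐ[P] fun _ => xstar c := by
    intro xstar
    set F : ℕ → Lp ℝ 2 P := fun n => xstar.compLp (X (t n)) with hF
    set FY : Lp ℝ 2 P := xstar.compLp Y with hFY
    have hcompc : Continuous (fun G : Lp E 2 P => xstar.compLp G) :=
      LipschitzWith.continuous_compLp xstar.lipschitz (map_zero xstar)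
    have hFconv : Tendsto (fun k => F (φ k)) atTop (nhds FY) :=
      (hcompc.continuousAt.tendsto).comp hconv
    have hcovL : ∀ n m, cov P (fun ω => xstar (X (t n) ω)) (fun ω => xstar (X (t m) ω))
        = covL P (F n) (F m) := fun n m =>
      cov_eq_covL P (xstar.coeFn_compLp' (X (t n))).symm (xstar.coeFn_compLp' (X (t m))).symm
    have key1 : ∀ n, covL P (F n) FY = 0 := by
      intro n
      have hA : Tendsto (fun k => covL P (F n) (F (φ k))) atTop (nhds (covL P (F n) FY)) :=
        covL_tendsto P tendsto_const_nhds hFconv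
      have hB : Tendsto (fun k => covL P (F n) (F (φ k))) atTop (nhds 0) := by
        have := (hcov xstar n).comp hφtop
        refine this.congr fun k => ?_
        exact hcovL n (φ k)
      exact tendsto_nhds_unique hA hB
    have key2 : covL P FY FY = 0 := by
      have hA : Tendsto (fun k => covL P (F (φ k)) FY) atTop (nhds (covL P FY FY)) :=
        covL_tendsto P hFconv tendsto_const_nhds
      have hB : Tendsto (fun k => covL P (F (φ k)) FY) atTop (nhds 0) := by
        simp only [key1]; exact tendsto_const_nhds
      exact tendsto_nhds_unique hA hB
    -- `covL P FY FY = 0` means `FY` is a.e. constant.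
    have hzero : FY - (inner (𝕜 := ℝ) FY (oneL2 P)) • oneL2 P = 0 := by
      have := key2
      unfold covL at this
      exact inner_self_eq_zero.1 this
    have hconst : ⇑FY =ᵐ[P] fun _ => (∫ ω, FY ω ∂P) := by
      have h1 : ⇑(FY - (inner (𝕜 := ℝ) FY (oneL2 P)) • oneL2 P) =ᵐ[P]
          fun ω => FY ω - ∫ a, FY a ∂P := sub_mean_coe P FY
      rw [hzero] at h1
      filter_upwards [h1, Lp.coeFn_zero ℝ 2 P] with ω hω h0
      rw [h0] at hω
      simp only [Pi.zero_apply] at hω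
      linarith
    have hmean : (∫ ω, FY ω ∂P) = xstar c := by
      rw [integral_congr_ae (xstar.coeFn_compLp' Y)]
      exact xstar.integral_comp_comm hYint
    filter_upwards [hconst, xstar.coeFn_compLp' Y] with ω h1 h2
    rw [← h2, h1, hmean]
  -- Step 3: `Y` is a.e. constant.
  have hYconst : ⇑Y =ᵐ[P] fun _ => c := by
    have h := ae_eq_zero_of_forall_dual ℝ (f := fun ω => Y ω - c) (μ := P) ?_
    · filter_upwards [h] with ω hω
      have : Y ω - c = 0 := hω
      linear_combination (norm := abel) this
    · intro xs
      filter_upwards [hcoord xs] with ω hω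
      simp only [map_sub, hω, sub_self, Pi.zero_apply]
  -- Step 4: variances of norms along the subsequence tend to `0`.
  set nLp : Lp E 2 P → Lp ℝ 2 P :=
    fun G => LipschitzWith.compLp lipschitzWith_one_norm norm_zero G with hnLp
  have hncont : Continuous nLp := LipschitzWith.continuous_compLp _ _
  have hNconv : Tendsto (fun k => nLp (X (t (φ k)))) atTop (nhds (nLp Y)) :=
    (hncont.continuousAt.tendsto).comp hconv
  set v : ℕ → ℝ := fun m => variance (fun ω => ‖X (t m) ω‖) P with hv
  have hveq : ∀ m, v m = covL P (nLp (X (t m))) (nLp (X (t m))) := by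
    intro m
    refine variance_eq_covL P ?_
    exact (LipschitzWith.coeFn_compLp lipschitzWith_one_norm norm_zero (X (t m))).symm
  have hnY : ⇑(nLp Y) =ᵐ[P] fun _ => ‖c‖ := by
    filter_upwards [LipschitzWith.coeFn_compLp lipschitzWith_one_norm norm_zero Y, hYconst]
      with ω h1 h2
    rw [h1]; simp only [Function.comp_apply, h2]
  have hlimY : covL P (nLp Y) (nLp Y) = 0 := by
    rw [← cov_covL, cov_congr P hnY hnY, cov_const]
  have hv0 : Tendsto (fun k => v (φ k)) atTop (nhds 0) := by
    have hA : Tendsto (fun k => covL P (nLp (X (t (φ k)))) (nLp (X (t (φ k))))) atTop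
        (nhds (covL P (nLp Y) (nLp Y))) :=
      covL_tendsto P hNconv hNconv
    rw [hlimY] at hA
    exact hA.congr fun k => (hveq (φ k)).symm
  -- Step 5: contradiction with the liminf hypothesis.
  have hbdd : IsBoundedUnder (· ≥ ·) atTop v :=
    ⟨0, eventually_map.2 (Eventually.of_forall fun m => show v m ≥ 0 from variance_nonneg _ _)⟩
  have hle : ∀ ε > 0, liminf v atTop ≤ ε := by
    intro ε hε
    refine liminf_le_of_frequently_le ?_ hbdd
    have he : ∀ᶠ k in atTop, v (φ k) < ε := hv0.eventually_lt_const hε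
    exact hφtop.frequently (he.mono fun k hk => hk.le).frequently
  have hL : 0 < liminf v atTop := hvar
  have hhalf := hle (liminf v atTop / 2) (by linarith)
  linarith
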